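/- Define the second order difference operator ∇²: ℝ^T → (ℝ³)^T by (∇²u)_τ = ([[u]]_{l₀,τ}, [[u]]_{l₁,τ}, [[u]]_{l₂,τ}) with [[u]]_{l_j,τ} = u_{τ_j⁺} + u_{τ_j⁻} - 2u_τ (set to 0 if either adjacent edge is a boundary edge). With inner products (u¹,u²)_V = Σ_τ u¹_τ u²_τ s_τ and (p¹,p²)_P = Σ_τ Σ_{l ∈ B₁(τ)} p¹_l p²_l len(l), the adjoint operator (∇²)*: P_M → V_M is given by ((∇²)*p)_τ = (1/s_τ)(Σ_{l ∈ B₂(τ), interior} p_l len(l) - 2 Σ_{l ∈ B₁(τ), interior} p_l len(l)), where B₁(τ) is the set of three barycenter–vertex lines of τ and B₂(τ) is the set of lines connecting vertices of τ to barycenters of the 1-ring triangles whose second-order stencil involves τ as a neighbor. That is, (∇²u, p)_P = (u, (∇²)*p)_V for all u ∈ ℝ^T, p ∈ P_M. -/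

import Mathlib

open Finset

/-- Adjoint of the second order difference operator `∇²` in the piecewise constant
calculus: `(∇²u, p)_P = (u, (∇²)^⋆ p)_V`, where lines are indexed by pairs
`(τ, j)`, `j : Fin 3` (the three barycenter–vertex lines `B₁(τ)` of `τ`),
`nbr τ j k` (`k : Fin 2`) are the two neighboring triangles `τ⁺, τ⁻` in the
stencil of line `(τ, j)`, and the `B₂(τ)`-sum collects (with multiplicity) all
interior lines whose stencil involves `τ` as a neighbor. -/
theorem second_order_adjoint_formula
    {T : Type*} [Fintype T] [DecidableEq T]
    (s : T → ℝ) (hs : ∀ τ, 0 < s τ)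
    (lenl : T → Fin 3 → ℝ) (hlen : ∀ τ j, 0 < lenl τ j)
    (interior : T → Fin 3 → Prop) [∀ τ j, Decidable (interior τ j)]
    (nbr : T → Fin 3 → Fin 2 → T)
    (D2 : (T → ℝ) → T → Fin 3 → ℝ)
    (hD2 : ∀ u τ j, D2 u τ j =
      if interior τ j then u (nbr τ j 0) + u (nbr τ j 1) - 2 * u τ else 0)
    (adj : (T → Fin 3 → ℝ) → T → ℝ)
    (hadj : ∀ p τ, adj p τ = (1 / s τ) *
      ((∑ σ, ∑ j, ∑ k : Fin 2,
          if interior σ j ∧ nbr σ j k = τ then p σ j * lenl σ j else 0)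
        - 2 * ∑ j, if interior τ j then p τ j * lenl τ j else 0)) :
    ∀ (u : T → ℝ) (p : T → Fin 3 → ℝ),
      ∑ τ, ∑ j, D2 u τ j * p τ j * lenl τ j = ∑ τ, u τ * adj p τ * s τ := by
  intro u p
  have hs' : ∀ τ : T, s τ ≠ 0 := fun τ => (hs τ).ne'
  have hrhs : ∀ τ, u τ * adj p τ * s τ =
      (∑ σ, ∑ j, ∑ k : Fin 2,
          if interior σ j ∧ nbr σ j k = τ then u τ * (p σ j * lenl σ j) else 0)
        - 2 * ∑ j, if interior τ j then u τ * (p τ j * lenl τ j) else 0 := by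
    intro τ
    rw [hadj]
    have hgen : ∀ a x : ℝ, a * (1 / s τ * x) * s τ = a * x := by
      intro a x
      field_simp
      rw [mul_assoc, mul_comm (s τ) x, ← mul_assoc, mul_div_assoc, div_self (hs' τ), mul_one]
    have h1 : u τ * (1 / s τ *
        ((∑ σ, ∑ j, ∑ k : Fin 2,
            if interior σ j ∧ nbr σ j k = τ then p σ j * lenl σ j else 0)
          - 2 * ∑ j, if interior τ j then p τ j * lenl τ j else 0)) * s τ
        = u τ * ((∑ σ, ∑ j, ∑ k : Fin 2,
            if interior σ j ∧ nbr σ j k = τ then p σ j * lenl σ j else 0)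
          - 2 * ∑ j, if interior τ j then p τ j * lenl τ j else 0) :=
      hgen _ _
    rw [h1, mul_sub]
    congr 1
    · rw [Finset.mul_sum]
      refine Finset.sum_congr rfl fun σ _ => ?_
      rw [Finset.mul_sum]
      refine Finset.sum_congr rfl fun j _ => ?_
      rw [Finset.mul_sum]
      refine Finset.sum_congr rfl fun k _ => ?_
      by_cases h : interior σ j ∧ nbr σ j k = τ <;> simp [h] <;> ring
    · rw [mul_left_comm, Finset.mul_sum]
      refine congrArg (2 * ·) ?_
      refine Finset.sum_congr rfl fun j _ => ?_
      by_cases h : interior τ j <;> simp [h] <;> ring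
  calc ∑ τ, ∑ j, D2 u τ j * p τ j * lenl τ j
      = ∑ τ, ((∑ j, ∑ k : Fin 2,
          if interior τ j then u (nbr τ j k) * (p τ j * lenl τ j) else 0)
          - 2 * ∑ j, if interior τ j then u τ * (p τ j * lenl τ j) else 0) := by
        refine Finset.sum_congr rfl fun τ _ => ?_
        rw [Finset.mul_sum, ← Finset.sum_sub_distrib]
        refine Finset.sum_congr rfl fun j _ => ?_
        rw [hD2]
        by_cases h : interior τ j <;> simp [h, Fin.sum_univ_two] <;> ring
    _ = ∑ τ, u τ * adj p τ * s τ := by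
        rw [Finset.sum_sub_distrib]
        simp only [hrhs]
        rw [Finset.sum_sub_distrib]
        congr 1
        · conv_rhs => rw [Finset.sum_comm]
          refine Finset.sum_congr rfl fun σ _ => ?_
          conv_rhs => rw [Finset.sum_comm]
          refine Finset.sum_congr rfl fun j _ => ?_
          conv_rhs => rw [Finset.sum_comm]
          refine Finset.sum_congr rfl fun k _ => ?_
          by_cases h : interior σ j <;> simp [h, Finset.sum_ite_eq]
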